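/- Let n ≥ 3 and let SL(n,ℤ) be generated by the set S of elementary matrices E_{pq}(±1) (p ≠ q), where E_{pq}(a) denotes the transvection differing from the identity matrix only by the entry a in position (p,q). Then for all indices i ≠ j and all integers r and k, the power E_{ij}(r)^k of the elementary matrix E_{ij}(r) satisfies |E_{ij}(r)^k|_{S̄} ≤ 2; i.e., every power of every elementary matrix is a product of at most two conjugates of elements of S. -/

import Mathlib

/-- The set of all conjugates of elements of `S`. -/
def conjSet {G : Type*} [Group G] (S : Set G) : Set G :=
  {x | ∃ g : G, ∃ s ∈ S, x = g * s * g⁻¹}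

/-- The word norm of `g` with respect to a generating set `T`:
the least length of a word in elements of `T` expressing `g`. -/
noncomputable def wordNorm {G : Type*} [Group G] (T : Set G) (g : G) : ℕ :=
  sInf {k | ∃ l : List G, (∀ x ∈ l, x ∈ T) ∧ l.prod = g ∧ l.length = k}

/-- The elementary transvection E_{ij}(a) ∈ SL(n,ℤ), equal to the identity matrix
except for the entry a in position (i,j). -/
def elemMat {n : ℕ} (i j : Fin n) (h : i ≠ j) (a : ℤ) :
    Matrix.SpecialLinearGroup (Fin n) ℤ :=
  ⟨Matrix.transvection i j a, by simpa using Matrix.det_transvection_of_ne i j h a⟩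


lemma elemMat_mul {n : ℕ} (i j : Fin n) (h : i ≠ j) (a b : ℤ) :
    elemMat i j h a * elemMat i j h b = elemMat i j h (a + b) :=
  Subtype.ext (Matrix.transvection_mul_transvection_same i j h a b)

lemma elemMat_inv {n : ℕ} (i j : Fin n) (h : i ≠ j) (a : ℤ) :
    (elemMat i j h a)⁻¹ = elemMat i j h (-a) := by
  apply inv_eq_of_mul_eq_one_right
  rw [elemMat_mul]
  apply Subtype.ext
  simp [elemMat]

lemma elemMat_zpow {n : ℕ} (i j : Fin n) (h : i ≠ j) (r k : ℤ) :
    (elemMat i j h r) ^ k = elemMat i j h (k * r) := by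
  induction k using Int.induction_on with
  | zero => apply Subtype.ext; simp [elemMat]; rfl
  | succ m ih => rw [zpow_add_one, ih, elemMat_mul]; ring_nf
  | pred m ih => rw [zpow_sub_one, ih, elemMat_inv, elemMat_mul]; ring_nf

lemma transvection_comm {n : ℕ} (i j l : Fin n) (hij : i ≠ j) (hil : i ≠ l)
    (hlj : l ≠ j) (c : ℤ) :
    Matrix.transvection i l c * Matrix.transvection l j 1 *
      Matrix.transvection i l (-c) * Matrix.transvection l j (-1) =
      Matrix.transvection i j c := by
  simp only [Matrix.transvection, Matrix.add_mul, Matrix.mul_add, Matrix.one_mul,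
    Matrix.mul_one, Matrix.single_mul_single_same,
    Matrix.single_mul_single_of_ne _ _ _ _ (hil.symm), 
    Matrix.single_mul_single_of_ne _ _ _ _ (hij.symm),
    Matrix.single_mul_single_of_ne _ _ _ _ (hlj.symm)]
  have hneg : ∀ (p q : Fin n) (a : ℤ),
      Matrix.single p q (-a) = -Matrix.single p q a := by
    intro p q a
    apply eq_neg_of_add_eq_zero_left
    rw [← Matrix.single_add]
    simp
  simp only [Matrix.zero_mul, add_zero, zero_add, mul_one, mul_neg_one, neg_mul_neg, hneg]
  abel

lemma elemMat_eq_prod {n : ℕ} (i j l : Fin n) (hij : i ≠ j) (hil : i ≠ l)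
    (hlj : l ≠ j) (c : ℤ) :
    elemMat i l hil c * elemMat l j hlj 1 * (elemMat i l hil c)⁻¹ *
      elemMat l j hlj (-1) = elemMat i j hij c := by
  rw [elemMat_inv]
  exact Subtype.ext (transvection_comm i j l hij hil hlj c)

/-- For n ≥ 3 and S the set of elementary matrices E_{pq}(±1) in SL(n,ℤ), every
power of every elementary matrix E_{ij}(r) is a product of at most two
conjugates of elements of S. -/
theorem elementary_matrix_powers_bounded (n : ℕ) (hn : 3 ≤ n)
    (S : Set (Matrix.SpecialLinearGroup (Fin n) ℤ))
    (hS : S = {M | ∃ p q : Fin n, ∃ h : p ≠ q,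
      M = elemMat p q h 1 ∨ M = elemMat p q h (-1)})
    (i j : Fin n) (hij : i ≠ j) (r k : ℤ) :
    wordNorm (conjSet S) ((elemMat i j hij r) ^ k) ≤ 2 := by
  obtain ⟨l, hl⟩ : ∃ l : Fin n, l ≠ i ∧ l ≠ j := by
    have h2 : ¬ ((Finset.univ : Finset (Fin n)) ⊆ ({i, j} : Finset (Fin n))) := by
      intro hsub
      have h3 := Finset.card_le_card hsub
      have h4 := Finset.card_insert_le i ({j} : Finset (Fin n))
      simp only [Finset.card_singleton, Finset.card_univ, Fintype.card_fin] at h3 h4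
      omega
    obtain ⟨l, -, hl⟩ := Finset.not_subset.mp h2
    exact ⟨l, by simpa [not_or] using hl⟩
  set c := k * r with hc
  have key : (elemMat i j hij r) ^ k =
      (elemMat i l (Ne.symm hl.1) c * elemMat l j hl.2 1 * (elemMat i l (Ne.symm hl.1) c)⁻¹) *
        elemMat l j hl.2 (-1) := by
    rw [elemMat_zpow, ← elemMat_eq_prod i j l hij (Ne.symm hl.1) hl.2 c]
  apply Nat.sInf_le
  refine ⟨[elemMat i l (Ne.symm hl.1) c * elemMat l j hl.2 1 * (elemMat i l (Ne.symm hl.1) c)⁻¹,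
    elemMat l j hl.2 (-1)], ?_, ?_, rfl⟩
  · rintro x hx
    simp only [List.mem_cons, List.mem_singleton, List.not_mem_nil, or_false] at hx
    rcases hx with rfl | rfl
    · exact ⟨elemMat i l (Ne.symm hl.1) c, elemMat l j hl.2 1,
        by rw [hS]; exact ⟨l, j, hl.2, Or.inl rfl⟩, rfl⟩
    · exact ⟨1, elemMat l j hl.2 (-1),
        by rw [hS]; exact ⟨l, j, hl.2, Or.inr rfl⟩, by group⟩
  · simpa using key.symm
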